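/- For every real θ ≤ 2 and every x > 0, one has (1 + θ)·sinh(x) < x·(θ + cosh(x)). -/
import Mathlib

open Real Set

private lemma auxA {x : ℝ} (hx : 0 < x) : Real.sinh x < x * Real.cosh x := by
  have h : StrictMonoOn (fun x : ℝ => x * Real.cosh x - Real.sinh x) (Ici 0) := by
    apply strictMonoOn_of_deriv_pos (convex_Ici 0)
    · fun_prop
    · intro y hy
      rw [interior_Ici] at hy
      have : deriv (fun x : ℝ => x * Real.cosh x - Real.sinh x) y = y * Real.sinh y := by
        simp [deriv_mul]
      rw [this]
      exact mul_pos hy (Real.sinh_pos_iff.2 hy)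
  have := h self_mem_Ici (le_of_lt hx : x ∈ Ici 0) hx
  simpa using this

private lemma auxB {x : ℝ} (hx : 0 < x) : 0 < 2 - 2 * Real.cosh x + x * Real.sinh x := by
  have h : StrictMonoOn (fun x : ℝ => 2 - 2 * Real.cosh x + x * Real.sinh x) (Ici 0) := by
    apply strictMonoOn_of_deriv_pos (convex_Ici 0)
    · fun_prop
    · intro y hy
      rw [interior_Ici] at hy
      have : deriv (fun x : ℝ => 2 - 2 * Real.cosh x + x * Real.sinh x) y
          = y * Real.cosh y - Real.sinh y := by
        simp [deriv_mul]; ring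
      rw [this]
      linarith [auxA hy]
  have := h self_mem_Ici (le_of_lt hx : x ∈ Ici 0) hx
  simpa using this

private lemma auxC {x : ℝ} (hx : 0 < x) : 3 * Real.sinh x < x * (2 + Real.cosh x) := by
  have h : StrictMonoOn (fun x : ℝ => x * (2 + Real.cosh x) - 3 * Real.sinh x) (Ici 0) := by
    apply strictMonoOn_of_deriv_pos (convex_Ici 0)
    · fun_prop
    · intro y hy
      rw [interior_Ici] at hy
      have : deriv (fun x : ℝ => x * (2 + Real.cosh x) - 3 * Real.sinh x) y
          = 2 - 2 * Real.cosh y + y * Real.sinh y := by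
        simp [deriv_sub, deriv_mul]; ring
      rw [this]
      exact auxB hy
  have := h self_mem_Ici (le_of_lt hx : x ∈ Ici 0) hx
  simp at this
  linarith

theorem stmt8 (θ : ℝ) (hθ : θ ≤ 2) (x : ℝ) (hx : 0 < x) :
    (1 + θ) * Real.sinh x < x * (θ + Real.cosh x) := by
  have h1 : x < Real.sinh x := (Real.self_lt_sinh_iff).2 hx
  have h2 := auxC hx
  nlinarith [mul_le_mul_of_nonneg_right hθ (le_of_lt (sub_pos.2 h1))]
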